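/- arXiv:2605.15043 — 2 statements merged into one kernel-verified Lean document; each statement's English description precedes it below -/
import Mathlib

section
/- Let G be an n-vertex (d±d')-nearly-regular γ-expander with d' ≤ d/8, and let S ⊆ V(G) be an α-uniform set of vertices. Then the induced subgraph G₂ = G ∖ S is (d₂ ± d₂')-nearly-regular, where d₂ = d(1 − |S|/n) and d₂' = d'(1 + |S|/n) + α(d + d'). Moreover, if G is a γ-expander, then G₂ is a γ₂-expander with γ₂ = γ − 4(|S|/n + α + d'/d). -/
noncomputable section

/-- The average degree of a graph: `2·e(G) / |V|`. -/
def avgDeg {W : Type*} (G : SimpleGraph W) : ℝ :=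
  2 * (G.edgeSet.ncard : ℝ) / (Nat.card W : ℝ)

/-- The number of edges of `G` crossing the cut `(S, Sᶜ)`, counted as ordered adjacent
pairs `(u, v)` with `u ∈ S`, `v ∉ S` (each cut edge is counted once). -/
def cutCount {W : Type*} (G : SimpleGraph W) (S : Set W) : ℕ :=
  {p : W × W | G.Adj p.1 p.2 ∧ p.1 ∈ S ∧ p.2 ∉ S}.ncard

/-- `G` is a `ρ`-expander: `e(X, V ∖ X) ≥ ρ·d̄(G)·|X|` for all `1 ≤ |X| ≤ (2/3)|V|`. -/
def IsExpander {W : Type*} (G : SimpleGraph W) (ρ : ℝ) : Prop :=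
  ∀ X : Set W, 1 ≤ X.ncard → (X.ncard : ℝ) ≤ 2 / 3 * (Nat.card W : ℝ) →
    ρ * avgDeg G * X.ncard ≤ (cutCount G X : ℝ)

/-- `G` is `(d ± d')`-nearly-regular: every degree lies in `[d − d', d + d']`. -/
def NearlyRegular {W : Type*} (G : SimpleGraph W) (d d' : ℝ) : Prop :=
  ∀ v : W, d - d' ≤ ((G.neighborSet v).ncard : ℝ) ∧ ((G.neighborSet v).ncard : ℝ) ≤ d + d'

open Finset in
lemma sum_ncard_neighbor {W : Type*} [Fintype W] (H : SimpleGraph W) :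
    ∑ w : W, ((H.neighborSet w).ncard) = 2 * H.edgeSet.ncard := by
  classical
  have h1 : ∀ w : W, (H.neighborSet w).ncard = H.degree w := by
    intro w
    rw [← Nat.card_coe_set_eq, Nat.card_eq_fintype_card]
    exact H.card_neighborSet_eq_degree w
  have h2 : H.edgeSet.ncard = #H.edgeFinset := by
    rw [Set.ncard_eq_toFinset_card']
    exact congrArg Finset.card (by ext e; simp)
  simp only [h1, h2]
  try exact H.sum_degrees_eq_twice_card_edges

lemma avgDeg_le {W : Type*} [Fintype W] (H : SimpleGraph W) (c : ℝ)
    (hW : 0 < Fintype.card W)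
    (h : ∀ w : W, ((H.neighborSet w).ncard : ℝ) ≤ c) : avgDeg H ≤ c := by
  have hs : ((2 * H.edgeSet.ncard : ℕ) : ℝ) ≤ (Fintype.card W : ℝ) * c := by
    rw [← sum_ncard_neighbor H]
    push_cast
    calc ∑ w : W, ((H.neighborSet w).ncard : ℝ) ≤ ∑ _w : W, c := Finset.sum_le_sum (fun w _ => h w)
    _ = (Fintype.card W : ℝ) * c := by simp [Finset.sum_const, mul_comm]
  rw [avgDeg, Nat.card_eq_fintype_card]
  rw [div_le_iff₀ (by positivity)]
  push_cast at hs ⊢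
  linarith [hs]

lemma le_avgDeg {W : Type*} [Fintype W] (H : SimpleGraph W) (c : ℝ)
    (hW : 0 < Fintype.card W)
    (h : ∀ w : W, c ≤ ((H.neighborSet w).ncard : ℝ)) : c ≤ avgDeg H := by
  have hs : (Fintype.card W : ℝ) * c ≤ ((2 * H.edgeSet.ncard : ℕ) : ℝ) := by
    rw [← sum_ncard_neighbor H]
    push_cast
    calc (Fintype.card W : ℝ) * c = ∑ _w : W, c := by simp [Finset.sum_const, mul_comm]
    _ ≤ ∑ w : W, ((H.neighborSet w).ncard : ℝ) := Finset.sum_le_sum (fun w _ => h w)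
  rw [avgDeg, Nat.card_eq_fintype_card]
  rw [le_div_iff₀ (by positivity)]
  push_cast at hs ⊢
  linarith [hs]

lemma avgDeg_nonneg' {W : Type*} (H : SimpleGraph W) : 0 ≤ avgDeg H := by
  unfold avgDeg; positivity

lemma induce_neighbor_ncard {V : Type*} [Fintype V] (G : SimpleGraph V) (s : Set V) (v : s) :
    ((G.induce s).neighborSet v).ncard = (G.neighborSet ↑v ∩ s).ncard := by
  have h : (Subtype.val '' ((G.induce s).neighborSet v)) = G.neighborSet ↑v ∩ s := by
    ext u
    simp only [Set.mem_image, SimpleGraph.mem_neighborSet, Set.mem_inter_iff]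
    constructor
    · rintro ⟨w, hw, rfl⟩; exact ⟨hw, w.2⟩
    · rintro ⟨h1, h2⟩; exact ⟨⟨u, h2⟩, h1, rfl⟩
  rw [← h, Set.ncard_image_of_injective _ Subtype.val_injective]

open Finset in
lemma pairs_ncard_eq_sum {V : Type*} [Fintype V] (G : SimpleGraph V) (A B : Set V) :
    {p : V × V | G.Adj p.1 p.2 ∧ p.1 ∈ A ∧ p.2 ∈ B}.ncard
      = ∑ u ∈ A.toFinite.toFinset, (G.neighborSet u ∩ B).ncard := by
  classical
  rw [Set.ncard_eq_toFinset_card', Set.toFinset_setOf]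
  rw [Finset.card_eq_sum_card_fiberwise (f := Prod.fst) (t := A.toFinite.toFinset)
    (fun p hp => by simp at hp ⊢; exact hp.2.1)]
  refine Finset.sum_congr rfl (fun u hu => ?_)
  rw [Set.Finite.mem_toFinset] at hu
  have h : G.neighborSet u ∩ B = {v | G.Adj u v ∧ v ∈ B} := by
    ext v; simp [SimpleGraph.mem_neighborSet, and_comm]
  rw [h, Set.ncard_eq_toFinset_card', Set.toFinset_setOf]
  apply Finset.card_nbij' (i := Prod.snd) (j := fun v => (u, v))
  · intro p hp; simp at hp ⊢
    obtain ⟨⟨h1, _, h3⟩, h4⟩ := hp; subst h4; exact ⟨h1, h3⟩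
  · intro v hv; simp at hv ⊢; tauto
  · intro p hp; simp at hp
    obtain ⟨_, h4⟩ := hp; rw [← h4]
  · intro v hv; rfl

lemma cut_split {V : Type*} [Fintype V] (G : SimpleGraph V) (S X' : Set V) (hXS : X' ⊆ Sᶜ) :
    cutCount G X'
      = {p : V × V | G.Adj p.1 p.2 ∧ p.1 ∈ X' ∧ p.2 ∈ S}.ncard
        + {p : V × V | G.Adj p.1 p.2 ∧ p.1 ∈ X' ∧ p.2 ∈ Sᶜ \ X'}.ncard := by
  rw [cutCount, ← Set.ncard_union_eq ?disj (Set.toFinite _) (Set.toFinite _)]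
  case disj =>
    rw [Set.disjoint_left]
    rintro ⟨u, v⟩ ⟨_, _, hv⟩ ⟨_, _, hv', _⟩
    exact hv' hv
  congr 1
  ext ⟨u, v⟩
  simp only [Set.mem_setOf_eq, Set.mem_union, Set.mem_diff, Set.mem_compl_iff]
  constructor
  · rintro ⟨ha, hu, hv⟩
    by_cases hvS : v ∈ S
    · exact Or.inl ⟨ha, hu, hvS⟩
    · exact Or.inr ⟨ha, hu, hvS, hv⟩
  · rintro (⟨ha, hu, hv⟩ | ⟨ha, hu, _, hv⟩)
    · exact ⟨ha, hu, fun hvX => hXS hvX hv⟩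
    · exact ⟨ha, hu, hv⟩

lemma cut_image {V : Type*} [Fintype V] (G : SimpleGraph V) (S : Set V) (X : Set ↥Sᶜ) :
    {p : V × V | G.Adj p.1 p.2 ∧ p.1 ∈ Subtype.val '' X ∧ p.2 ∈ Sᶜ \ Subtype.val '' X}.ncard
      = cutCount (G.induce Sᶜ) X := by
  rw [cutCount]
  have hf : Function.Injective (fun p : ↥Sᶜ × ↥Sᶜ => ((p.1 : V), (p.2 : V))) := by
    intro p q h
    simp only [Prod.mk.injEq] at h
    exact Prod.ext (Subtype.val_injective h.1) (Subtype.val_injective h.2)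
  rw [← Set.ncard_image_of_injective _ hf]
  congr 1
  ext ⟨u, v⟩
  simp only [Set.mem_image, Set.mem_setOf_eq, Set.mem_diff, Prod.mk.injEq, Prod.exists]
  constructor
  · rintro ⟨ha, ⟨a, haX, hae⟩, hvS, hvX⟩
    refine ⟨a, ⟨v, hvS⟩, ⟨?_, haX, ?_⟩, hae, rfl⟩
    · show G.Adj (↑a) v; rw [hae]; exact ha
    · intro hb; exact hvX ⟨⟨v, hvS⟩, hb, rfl⟩
  · rintro ⟨a, b, ⟨ha, haX, hbX⟩, h1, h2⟩
    subst h1; subst h2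
    refine ⟨ha, ⟨a, haX, rfl⟩, b.2, ?_⟩
    rintro ⟨b', hb', hbe⟩
    exact hbX (Subtype.val_injective hbe ▸ hb')

lemma key_ineq (d t α γ₂ ε : ℝ) (hd : 0 < d) (ht0 : 0 ≤ t) (ht1 : t ≤ 1) (hα0 : 0 ≤ α)
    (hε0 : 0 ≤ ε) (hε8 : ε ≤ 1/8) (hγ₂ : 0 < γ₂) (hγ₂1 : γ₂ ≤ 1) :
    γ₂ * (d*(1-t) + (ε*d)*(1+t) + α*(d+ε*d)) ≤ (γ₂ + 3*t + 3*α + 4*ε) * (d - ε*d) := by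
  nlinarith [mul_nonneg (mul_nonneg hγ₂.le ht0) hd.le, mul_nonneg ht0 hd.le,
    mul_nonneg hα0 hd.le, mul_nonneg hε0 hd.le,
    mul_nonneg (mul_nonneg ht0 hε0) hd.le,
    mul_nonneg (mul_nonneg hα0 hε0) hd.le,
    mul_nonneg (mul_nonneg (sub_nonneg.2 hγ₂1) hε0) hd.le,
    mul_nonneg (mul_nonneg (sub_nonneg.2 hγ₂1) hα0) hd.le,
    mul_nonneg (mul_nonneg ht0 (sub_nonneg.2 ht1)) hd.le,
    mul_nonneg (mul_nonneg (mul_nonneg ht0 hε0) hγ₂.le) hd.le,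
    mul_nonneg (mul_nonneg (mul_nonneg hα0 hε0) hγ₂.le) hd.le]

set_option maxHeartbeats 2000000 in
/-- Removing an `α`-uniform set `S` from an `n`-vertex `(d ± d')`-nearly-regular
`γ`-expander `G` (with `d' ≤ d/8`) leaves a `(d₂ ± d₂')`-nearly-regular graph with
`d₂ = d(1 − |S|/n)` and `d₂' = d'(1 + |S|/n) + α(d + d')`; moreover it is a
`γ₂`-expander with `γ₂ = γ − 4(|S|/n + α + d'/d)`. -/
theorem statement4 {V : Type*} [Fintype V] (G : SimpleGraph V) (d d' α γ : ℝ)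
    (hd : 0 < d) (hd' : d' ≤ d / 8) (hγ0 : 0 < γ) (hγ1 : γ ≤ 1)
    (hreg : NearlyRegular G d d')
    (S : Set V)
    (hunif : ∀ v : V,
      |((G.neighborSet v ∩ S).ncard : ℝ) - (S.ncard : ℝ) * avgDeg G / (Fintype.card V : ℝ)|
        ≤ α * avgDeg G)
    (hexp : IsExpander G γ) :
    NearlyRegular (G.induce Sᶜ) (d * (1 - (S.ncard : ℝ) / (Fintype.card V : ℝ)))
        (d' * (1 + (S.ncard : ℝ) / (Fintype.card V : ℝ)) + α * (d + d')) ∧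
      IsExpander (G.induce Sᶜ)
        (γ - 4 * ((S.ncard : ℝ) / (Fintype.card V : ℝ) + α + d' / d)) := by
  classical
  rcases Nat.eq_zero_or_pos (Fintype.card V) with hn | hn
  · have hVempty : IsEmpty V := Fintype.card_eq_zero_iff.mp hn
    constructor
    · intro v; exact (hVempty.false v.1).elim
    · intro X hX1 _
      obtain ⟨x, -⟩ := Set.nonempty_of_ncard_ne_zero (Nat.one_le_iff_ne_zero.mp hX1)
      exact (hVempty.false x.1).elim
  -- n > 0
  have hVne : Nonempty V := Fintype.card_pos_iff.mp hn
  have hnR : (0 : ℝ) < (Fintype.card V : ℝ) := by exact_mod_cast hn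
  set n : ℝ := (Fintype.card V : ℝ) with hnn
  obtain ⟨v₀⟩ := hVne
  have hd'0 : 0 ≤ d' := by linarith [(hreg v₀).1, (hreg v₀).2]
  have hA_lb : d - d' ≤ avgDeg G := le_avgDeg G _ hn (fun v => (hreg v).1)
  have hA_ub : avgDeg G ≤ d + d' := avgDeg_le G _ hn (fun v => (hreg v).2)
  have hA_pos : 0 < avgDeg G := by linarith
  have hα0 : 0 ≤ α := by
    have h := (abs_nonneg _).trans (hunif v₀)
    by_contra hc
    push_neg at hc
    nlinarith [h]
  set t : ℝ := (S.ncard : ℝ) / n with ht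
  have hS_le : (S.ncard : ℝ) ≤ n := by
    rw [hnn]
    have : S.ncard ≤ (Set.univ : Set V).ncard :=
      Set.ncard_le_ncard (Set.subset_univ _) Set.finite_univ
    rw [Set.ncard_univ, Nat.card_eq_fintype_card] at this
    exact_mod_cast this
  have ht0 : 0 ≤ t := by positivity
  have ht1 : t ≤ 1 := by rw [ht]; exact div_le_one_of_le₀ hS_le hnR.le
  have htA : (S.ncard : ℝ) * avgDeg G / n = t * avgDeg G := by rw [ht]; ring
  have huni : ∀ v : V, t * avgDeg G - α * avgDeg G ≤ ((G.neighborSet v ∩ S).ncard : ℝ)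
      ∧ ((G.neighborSet v ∩ S).ncard : ℝ) ≤ t * avgDeg G + α * avgDeg G := by
    intro v
    have h := abs_le.mp (hunif v)
    rw [htA] at h
    constructor <;> linarith [h.1, h.2]
  have hdeg2 : ∀ v : ↥Sᶜ, (((G.induce Sᶜ).neighborSet v).ncard : ℝ)
      = ((G.neighborSet ↑v).ncard : ℝ) - ((G.neighborSet (↑v) ∩ S).ncard : ℝ) := by
    intro v
    rw [induce_neighbor_ncard]
    have hsplit := Set.ncard_inter_add_ncard_diff_eq_ncard (G.neighborSet ↑v) S (Set.toFinite _)
    have hdiff : G.neighborSet (↑v) ∩ Sᶜ = G.neighborSet ↑v \ S := (Set.diff_eq _ _).symm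
    rw [hdiff]
    have := congrArg (fun k : ℕ => (k : ℝ)) hsplit
    push_cast at this
    linarith
  have part1 : NearlyRegular (G.induce Sᶜ) (d * (1 - t))
      (d' * (1 + t) + α * (d + d')) := by
    intro v
    obtain ⟨h1l, h1u⟩ := hreg (↑v : V)
    obtain ⟨h2l, h2u⟩ := huni (↑v : V)
    have h3 := hdeg2 v
    have e1 : t * avgDeg G ≤ t * (d + d') := mul_le_mul_of_nonneg_left hA_ub ht0
    have e2 : α * avgDeg G ≤ α * (d + d') := mul_le_mul_of_nonneg_left hA_ub hα0
    have e3 : t * (d - d') ≤ t * avgDeg G := mul_le_mul_of_nonneg_left hA_lb ht0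
    constructor
    · rw [h3]; linarith [h1l, h2u, e1, e2]
    · rw [h3]; linarith [h1u, h2l, e3, e2]
  refine ⟨part1, ?_⟩
  intro X hX1 hX2
  have hXne : X.Nonempty := Set.nonempty_of_ncard_ne_zero (Nat.one_le_iff_ne_zero.mp hX1)
  have hScne : Nonempty ↥Sᶜ := ⟨hXne.some⟩
  have hn2 : 0 < Fintype.card ↥Sᶜ := Fintype.card_pos_iff.mpr hScne
  set X' : Set V := Subtype.val '' X with hX'
  have hX'S : X' ⊆ Sᶜ := by rintro _ ⟨a, _, rfl⟩; exact a.2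
  have hX'card : X'.ncard = X.ncard := Set.ncard_image_of_injective _ Subtype.val_injective
  have hNatSc : ((Nat.card ↥Sᶜ : ℕ) : ℝ) ≤ n := by
    rw [Nat.card_coe_set_eq, hnn]
    have : (Sᶜ : Set V).ncard ≤ (Set.univ : Set V).ncard :=
      Set.ncard_le_ncard (Set.subset_univ _) Set.finite_univ
    rw [Set.ncard_univ, Nat.card_eq_fintype_card] at this
    exact_mod_cast this
  have hc1 : 1 ≤ X'.ncard := by rw [hX'card]; exact hX1
  have hc2 : (X'.ncard : ℝ) ≤ 2 / 3 * n := by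
    rw [hX'card]
    calc (X.ncard : ℝ) ≤ 2 / 3 * (Nat.card ↥Sᶜ : ℝ) := hX2
    _ ≤ 2 / 3 * n := by linarith
  have hexpX := hexp X' hc1 (by rw [Nat.card_eq_fintype_card]; exact hc2)
  have hsplit := cut_split G S X' hX'S
  have himg := cut_image G S X
  set c : ℝ := (X.ncard : ℝ) with hc
  have hc0 : (0:ℝ) ≤ c := by positivity
  have hcc : (1:ℝ) ≤ c := by rw [hc]; exact_mod_cast hX1
  set A : ℝ := avgDeg G with hA
  set eS : ℝ := ({p : V × V | G.Adj p.1 p.2 ∧ p.1 ∈ X' ∧ p.2 ∈ S}.ncard : ℝ) with heSd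
  set eC : ℝ := ({p : V × V | G.Adj p.1 p.2 ∧ p.1 ∈ X' ∧ p.2 ∈ Sᶜ \ X'}.ncard : ℝ) with heCd
  have f1 : γ * A * c ≤ eS + eC := by
    have := hexpX
    rw [hX'card] at this
    rw [heSd, heCd]
    calc γ * A * c ≤ (cutCount G X' : ℝ) := this
    _ = eS + eC := by rw [hsplit]; push_cast [heSd, heCd]; ring
  have f2 : eS ≤ c * ((t + α) * A) := by
    rw [heSd, pairs_ncard_eq_sum]
    push_cast
    calc ∑ u ∈ X'.toFinite.toFinset, ((G.neighborSet u ∩ S).ncard : ℝ)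
        ≤ ∑ _u ∈ X'.toFinite.toFinset, ((t + α) * A) :=
          Finset.sum_le_sum (fun u _ => by linarith [(huni u).2])
    _ = (X'.toFinite.toFinset.card : ℝ) * ((t + α) * A) := by
          rw [Finset.sum_const, nsmul_eq_mul]
    _ = c * ((t + α) * A) := by
          rw [← Set.ncard_eq_toFinset_card _ X'.toFinite, hX'card, hc]
  have hcut2 : eC = (cutCount (G.induce Sᶜ) X : ℝ) := by rw [heCd, himg]
  set D2 : ℝ := d * (1 - t) + (d' * (1 + t) + α * (d + d')) with hD2
  have f3 : avgDeg (G.induce Sᶜ) ≤ D2 := avgDeg_le _ _ hn2 (fun w => (part1 w).2)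
  have hA2nn : 0 ≤ avgDeg (G.induce Sᶜ) := avgDeg_nonneg' _
  set γ₂ : ℝ := γ - 4 * (t + α + d' / d) with hγ₂d
  show γ₂ * avgDeg (G.induce Sᶜ) * c ≤ (cutCount (G.induce Sᶜ) X : ℝ)
  rcases le_or_gt γ₂ 0 with hγ₂ | hγ₂
  · have : γ₂ * avgDeg (G.induce Sᶜ) * c ≤ 0 := by
      apply mul_nonpos_of_nonpos_of_nonneg _ hc0
      exact mul_nonpos_of_nonpos_of_nonneg hγ₂ hA2nn
    calc γ₂ * avgDeg (G.induce Sᶜ) * c ≤ 0 := this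
    _ ≤ (cutCount (G.induce Sᶜ) X : ℝ) := Nat.cast_nonneg _
  -- main case
  set ε : ℝ := d' / d with hεd
  have hεe : d' = ε * d := by rw [hεd]; field_simp
  have hε0 : 0 ≤ ε := by rw [hεd]; exact div_nonneg hd'0 hd.le
  have hε8 : ε ≤ 1 / 8 := by rw [hεd]; rw [div_le_iff₀ hd]; linarith
  have hγ₂1 : γ₂ ≤ 1 := by
    rw [hγ₂d]; linarith [hε0, ht0, hα0, hγ1]
  have key : γ₂ * D2 ≤ (γ - t - α) * (d - d') := by
    have hγeq : γ = γ₂ + 4 * (t + α + ε) := by rw [hγ₂d]; ring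
    rw [hD2, hγeq, hεe]
    linarith [key_ineq d t α γ₂ ε hd ht0 ht1 hα0 hε0 hε8 hγ₂ hγ₂1]
  have f6 : 0 ≤ γ - t - α := by
    rw [hγ₂d] at hγ₂; linarith [hε0]
  have g1 : γ₂ * avgDeg (G.induce Sᶜ) * c ≤ γ₂ * D2 * c := by
    apply mul_le_mul_of_nonneg_right _ hc0
    exact mul_le_mul_of_nonneg_left f3 hγ₂.le
  have g2 : γ₂ * D2 * c ≤ (γ - t - α) * (d - d') * c :=
    mul_le_mul_of_nonneg_right key hc0
  have g3 : (γ - t - α) * (d - d') * c ≤ (γ - t - α) * A * c := by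
    apply mul_le_mul_of_nonneg_right _ hc0
    exact mul_le_mul_of_nonneg_left hA_lb f6
  rw [← hcut2]
  linarith [f1, f2, g1, g2, g3]
end
end

section
/- Let G be an n-vertex (d±d')-nearly-regular γ-expander with d' ≤ d/4. Then G is a (γ', s)-expander with γ' = (2/5)γ and s = γd/4; that is, for every U ⊆ V(G) with 1 ≤ |U| ≤ (2/3)n and every edge set F with |F| ≤ s|U|, the set of vertices outside U having a neighbour in U in G−F has size at least (2/5)γ|U|. -/
noncomputable section

/-- The external neighbourhood of `U` in `H`: vertices outside `U` with a neighbour in `U`. -/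
def extNbhd {W : Type*} (H : SimpleGraph W) (U : Set W) : Set W :=
  {v | v ∉ U ∧ ∃ u ∈ U, H.Adj u v}

/-- An `n`-vertex `(d ± d')`-nearly-regular `γ`-expander with `d' ≤ d/4`
is a `((2/5)γ, γd/4)`-expander: for every `U` with `1 ≤ |U| ≤ (2/3)n` and every edge set
`F` with `|F| ≤ (γd/4)|U|`, the external neighbourhood of `U` in `G − F` has size at
least `(2/5)γ|U|`. -/
theorem statement11 {V : Type*} [Fintype V] (G : SimpleGraph V) (d d' γ : ℝ)
    (hd : 0 < d) (hd'0 : 0 ≤ d') (hd' : d' ≤ d / 4) (hγ : 0 ≤ γ)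
    (hreg : ∀ v : V, d - d' ≤ ((G.neighborSet v).ncard : ℝ) ∧
      ((G.neighborSet v).ncard : ℝ) ≤ d + d')
    (hexp : IsExpander G γ) :
    ∀ (U : Set V) (F : Set (Sym2 V)), F ⊆ G.edgeSet →
      1 ≤ U.ncard → (U.ncard : ℝ) ≤ 2 / 3 * (Fintype.card V : ℝ) →
      (F.ncard : ℝ) ≤ (γ * d / 4) * U.ncard →
      (2 / 5) * γ * U.ncard ≤ ((extNbhd (G.deleteEdges F) U).ncard : ℝ) := by
  classical
  intro U F hF hU1 hU2 hFcard
  have hVne : Nonempty V := by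
    rcases (Set.nonempty_of_ncard_ne_zero (by omega) : U.Nonempty) with ⟨u, _⟩
    exact ⟨u⟩
  have hn : 0 < (Fintype.card V : ℝ) := by
    have := Fintype.card_pos (α := V)
    exact_mod_cast this
  -- degrees
  have hdeg : ∀ v : V, (G.neighborSet v).ncard = G.degree v := by
    intro v
    rw [Set.ncard_eq_toFinset_card']
    try simp [SimpleGraph.degree, SimpleGraph.neighborFinset_def]
  have hsum : (∑ v : V, G.degree v) = 2 * G.edgeSet.ncard := by
    rw [SimpleGraph.sum_degrees_eq_twice_card_edges, Set.ncard_eq_toFinset_card']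
    try simp [SimpleGraph.edgeFinset]
  -- average degree bound
  have havg : d - d' ≤ avgDeg G := by
    rw [avgDeg, Nat.card_eq_fintype_card, le_div_iff₀ hn]
    have h1 : (Fintype.card V : ℝ) * (d - d') ≤ ∑ v : V, ((G.neighborSet v).ncard : ℝ) := by
      calc (Fintype.card V : ℝ) * (d - d') = ∑ _v : V, (d - d') := by
            rw [Finset.sum_const, Finset.card_univ]; ring
        _ ≤ ∑ v : V, ((G.neighborSet v).ncard : ℝ) :=
            Finset.sum_le_sum fun v _ => (hreg v).1
    have h2 : ∑ v : V, ((G.neighborSet v).ncard : ℝ) = 2 * (G.edgeSet.ncard : ℝ) := by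
      have h : ∑ v : V, (G.neighborSet v).ncard = 2 * G.edgeSet.ncard := by
        simp only [hdeg]; exact hsum
      exact_mod_cast h
    linarith
  -- expander lower bound on cut
  have hcut : γ * (d - d') * U.ncard ≤ (cutCount G U : ℝ) := by
    have := hexp U hU1 (by rwa [Nat.card_eq_fintype_card])
    have hUc : (0:ℝ) ≤ U.ncard := Nat.cast_nonneg _
    nlinarith [mul_le_mul_of_nonneg_left havg hγ]
  -- upper bound on cut
  set N : Set V := extNbhd (G.deleteEdges F) U with hN
  set P : Set (V × V) := {p : V × V | G.Adj p.1 p.2 ∧ p.1 ∈ U ∧ p.2 ∉ U} with hP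
  have hPfin : P.Finite := Set.toFinite _
  set Pf : Finset (V × V) := hPfin.toFinset with hPf
  have hcutP : cutCount G U = Pf.card := by
    rw [cutCount, Set.ncard_eq_toFinset_card _ hPfin]
  set P1 : Finset (V × V) := Pf.filter (fun p => s(p.1, p.2) ∈ F) with hP1
  set P2 : Finset (V × V) := Pf.filter (fun p => s(p.1, p.2) ∉ F) with hP2
  have hsplit : P1.card + P2.card = Pf.card := Finset.card_filter_add_card_filter_not _
  -- P1 bound
  have hFfin : F.Finite := Set.Finite.subset (Set.toFinite _) hF
  have hP1card : P1.card ≤ F.ncard := by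
    rw [Set.ncard_eq_toFinset_card _ hFfin]
    apply Finset.card_le_card_of_injOn (fun p => s(p.1, p.2))
    · intro p hp
      simp only [hP1, Finset.mem_filter] at hp
      exact hFfin.mem_toFinset.mpr (Finset.mem_filter.mp hp).2
    · intro p hp q hq hpq
      have hp' : p ∈ P1 := hp
      have hq' : q ∈ P1 := hq
      simp only [hP1, Finset.mem_filter, hPf, Set.Finite.mem_toFinset, hP,
        Set.mem_setOf_eq] at hp' hq'
      rcases Sym2.eq_iff.mp hpq with ⟨h1, h2⟩ | ⟨h1, h2⟩
      · exact Prod.ext h1 h2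
      · have hpU : p.1 ∈ U := hp'.1.2.1
        rw [h1] at hpU
        exact absurd hpU hq'.1.2.2
  -- P2 bound
  have hNfin : N.Finite := Set.toFinite _
  set Nf : Finset V := hNfin.toFinset with hNf
  have hP2sub : P2 ⊆ Nf.biUnion (fun v => (G.neighborFinset v).image (fun u => (u, v))) := by
    intro p hp
    simp only [hP2, Finset.mem_filter, hPf, Set.Finite.mem_toFinset, hP, Set.mem_setOf_eq] at hp
    obtain ⟨⟨hadj, hp1, hp2⟩, hnF⟩ := hp
    have hmem : p.2 ∈ N := ⟨hp2, p.1, hp1, by rw [SimpleGraph.deleteEdges_adj]; exact ⟨hadj, hnF⟩⟩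
    refine Finset.mem_biUnion.mpr ⟨p.2, hNfin.mem_toFinset.mpr hmem, ?_⟩
    exact Finset.mem_image.mpr ⟨p.1, by simp [hadj.symm], rfl⟩
  have hP2card : (P2.card : ℝ) ≤ (d + d') * N.ncard := by
    have h1 : P2.card ≤ ∑ v ∈ Nf, ((G.neighborFinset v).image (fun u => (u, v))).card :=
      le_trans (Finset.card_le_card hP2sub) (Finset.card_biUnion_le)
    have h2 : (∑ v ∈ Nf, (((G.neighborFinset v).image (fun u => (u, v))).card : ℝ))
        ≤ ∑ v ∈ Nf, (d + d') := by
      apply Finset.sum_le_sum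
      intro v _
      calc (((G.neighborFinset v).image (fun u => (u, v))).card : ℝ)
          ≤ ((G.neighborFinset v).card : ℝ) := by exact_mod_cast Finset.card_image_le
        _ = ((G.neighborSet v).ncard : ℝ) := by rw [hdeg v]; rfl
        _ ≤ d + d' := (hreg v).2
    have h3 : (∑ _v ∈ Nf, (d + d')) = (Nf.card : ℝ) * (d + d') := by
      rw [Finset.sum_const]; ring
    have h4 : Nf.card = N.ncard := (Set.ncard_eq_toFinset_card _ hNfin).symm
    have h1' : (P2.card : ℝ) ≤ ∑ v ∈ Nf, (((G.neighborFinset v).image (fun u => (u, v))).card : ℝ) := by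
      exact_mod_cast h1
    calc (P2.card : ℝ) ≤ _ := h1'
      _ ≤ ∑ v ∈ Nf, (d + d') := h2
      _ = (Nf.card : ℝ) * (d + d') := h3
      _ = (d + d') * N.ncard := by rw [h4]; ring
  -- combine
  have hcombine : (cutCount G U : ℝ) ≤ (F.ncard : ℝ) + (d + d') * N.ncard := by
    rw [hcutP, ← hsplit]
    push_cast
    have : (P1.card : ℝ) ≤ F.ncard := by exact_mod_cast hP1card
    linarith
  have hUc : (0:ℝ) ≤ U.ncard := Nat.cast_nonneg _
  have hNc : (0:ℝ) ≤ N.ncard := Nat.cast_nonneg _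
  nlinarith [hcut, hcombine, hFcard, mul_nonneg hγ hUc]
end
end
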